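/- For the 1×n grid (path) graph viewed as a wazir graph, the alternating sum Σ_k (−1)^k N_k over dominating sets of size k equals (−1)^{⌈n/2⌉}; but for the 2×2 grid graph (4-cycle C_4), the alternating sum equals 3, showing that the ±1 phenomenon fails for grid graphs. -/

import Mathlib

/-- `S` is a dominating set: every vertex is in `S` or adjacent to a member of `S`. -/
def IsDomSet {V : Type*} (G : SimpleGraph V) (S : Finset V) : Prop :=
  ∀ v, v ∈ S ∨ ∃ u ∈ S, G.Adj u v

instance {V : Type*} [Fintype V] [DecidableEq V] (G : SimpleGraph V)
    [DecidableRel G.Adj] : DecidablePred (IsDomSet G) :=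
  fun _ => inferInstanceAs (Decidable (∀ _, _ ∨ _))


/-- The `m × n` grid (wazir) graph: vertex `p` represents board square
`(p.1.val + 1, p.2.val + 1)`, and `p ~ q` iff `|Δx| + |Δy| = 1`. -/
def gridGraph (m n : ℕ) : SimpleGraph (Fin m × Fin n) where
  Adj p q := ((p.1.val : ℤ) - q.1.val).natAbs + ((p.2.val : ℤ) - q.2.val).natAbs = 1
  symm := by
    constructor
    intro p q h
    beta_reduce at h ⊢
    rw [show ((q.1.val : ℤ) - p.1.val) = -((p.1.val : ℤ) - q.1.val) by ring,
      show ((q.2.val : ℤ) - p.2.val) = -((p.2.val : ℤ) - q.2.val) by ring,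
      Int.natAbs_neg, Int.natAbs_neg]
    exact h
  loopless := by constructor; intro p h; simp at h

instance (m n : ℕ) : DecidableRel (gridGraph m n).Adj :=
  fun p q => decidable_of_iff
    (((p.1.val : ℤ) - q.1.val).natAbs + ((p.2.val : ℤ) - q.2.val).natAbs = 1) Iff.rfl


def okB : (n : ℕ) → Bool → Bool → (Fin n → Bool) → Bool
  | 0, _, req, _ => !req
  | n+1, pre, req, b => (!req || b 0) && okB n (b 0) (!(pre || b 0)) (fun i => b i.succ)

def domSum : ℕ → Bool → Bool → ℤ
  | 0, _, req => if req then 0 else 1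
  | n+1, pre, req => (if req then 0 else domSum n false (!pre)) - domSum n true false

lemma sum_okB (n : ℕ) (pre req : Bool) :
    (∑ b : Fin n → Bool, if okB n pre req b then ∏ i, (if b i then (-1:ℤ) else 1) else 0)
      = domSum n pre req := by
  induction n generalizing pre req with
  | zero =>
    simp [okB, domSum]
    cases req <;> simp
  | succ n IH =>
    rw [← Equiv.sum_comp (Fin.consEquiv (fun _ => Bool))]
    rw [Fintype.sum_prod_type, Fintype.sum_bool]
    have key : ∀ (b0 : Bool) (t : Fin n → Bool),
        (if okB (n+1) pre req (Fin.consEquiv (fun _ => Bool) (b0, t)) then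
          ∏ i, (if (Fin.consEquiv (fun _ => Bool) (b0, t)) i then (-1:ℤ) else 1) else 0)
        = (if b0 then (-1:ℤ) else 1) *
          (if okB n b0 (!(pre || b0)) t then ∏ i, (if t i then (-1:ℤ) else 1) else 0)
            * (if !req || b0 then 1 else 0) := by
      intro b0 t
      have hc : (Fin.consEquiv (fun _ => Bool) (b0, t)) = Fin.cons b0 t := rfl
      rw [hc]
      have h1 : okB (n+1) pre req (Fin.cons b0 t)
          = ((!req || b0) && okB n b0 (!(pre || b0)) t) := by
        simp [okB, Fin.cons_zero, Fin.cons_succ]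
      rw [h1, Fin.prod_univ_succ, Fin.cons_zero]
      simp only [Fin.cons_succ]
      cases req <;> cases b0 <;> cases okB n _ _ t <;> simp
    simp only [key]
    have hneg : ∀ (c : Bool) (x : ℤ), (if c = true then -x else 0) = -(if c = true then x else 0) := by
      intro c x; cases c <;> simp
    cases req <;>
      simp [domSum, IH, hneg, Finset.sum_neg_distrib, mul_comm] <;> ring

lemma domSum_req (n : ℕ) (pre pre' : Bool) : domSum n pre true = domSum n pre' true := by
  cases n <;> simp [domSum]

lemma domSum_period (n : ℕ) (pre req : Bool) :
    domSum (n + 4) pre req = domSum n pre req := by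
  have h4 : n + 4 = n+1+1+1+1 := rfl
  cases pre <;> cases req
  · simp [h4, domSum]; ring
  · simp [h4, domSum]; ring
  · simp [h4, domSum]; ring
  · simp [h4, domSum]; rw [← domSum_req n false true]; ring

lemma domSum_val : ∀ n : ℕ, 1 ≤ n → domSum n false false = (-1 : ℤ) ^ ((n + 1) / 2) := by
  intro n
  induction n using Nat.strong_induction_on with
  | _ n IH =>
    intro hn
    match n, hn with
    | 1, _ => decide
    | 2, _ => decide
    | 3, _ => decide
    | 4, _ => decide
    | (m+5), _ =>
      rw [show m+5 = (m+1)+4 from rfl, domSum_period, IH (m+1) (by omega) (by omega)]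
      rw [show (m+1+4+1)/2 = (m+1+1)/2 + 2 by omega, pow_add]
      norm_num


lemma okB_iff : ∀ (n : ℕ) (pre req : Bool) (b : Fin n → Bool),
    okB n pre req b = true ↔
      ((req = true → ∃ h : 0 < n, b ⟨0, h⟩ = true) ∧
       ∀ i (h : i < n), b ⟨i, h⟩ = true ∨ (i = 0 ∧ pre = true) ∨
         ∃ j, ∃ hj : j < n, b ⟨j, hj⟩ = true ∧ (j + 1 = i ∨ i + 1 = j)) := by
  intro n
  induction n with
  | zero =>
    intro pre req b
    cases req <;> simp [okB]
  | succ n IH =>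
    intro pre req b
    have hz : (0 : Fin (n+1)) = ⟨0, Nat.succ_pos n⟩ := rfl
    rw [show okB (n+1) pre req b
        = ((!req || b 0) && okB n (b 0) (!(pre || b 0)) (fun i => b i.succ)) from rfl]
    rw [Bool.and_eq_true, IH]
    simp only [Fin.succ_mk, hz]
    constructor
    · rintro ⟨h0, hreq, hdom⟩
      constructor
      · intro hr
        subst hr
        simp only [Bool.not_true, Bool.false_or] at h0
        exact ⟨Nat.succ_pos n, h0⟩
      · intro i hi
        match i, hi with
        | 0, hi =>
          by_cases hb0 : b ⟨0, Nat.succ_pos n⟩ = true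
          · left; exact hb0
          · rcases Bool.eq_false_or_eq_true pre with hp | hp
            · right; left; exact ⟨rfl, hp⟩
            · -- pre false, b0 false: hreq forces b 1
              have hb0' : b 0 = false := Bool.eq_false_iff.mpr hb0
              have hcond : (!(pre || b ⟨0, Nat.succ_pos n⟩)) = true := by
                simp [hp, hb0']
              rcases hreq hcond with ⟨h, hb1⟩
              right; right
              exact ⟨1, by omega, hb1, by omega⟩
        | (k+1), hi =>
          rcases hdom k (by omega) with h | ⟨hk0, hbk⟩ | ⟨j, hj, hbj, hor⟩
          · left; exact h
          · right; right
            refine ⟨0, by omega, ?_, by omega⟩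
            subst hk0; exact hbk
          · right; right
            exact ⟨j+1, by omega, hbj, by omega⟩
    · rintro ⟨hreq, hdom⟩
      refine ⟨?_, ?_, ?_⟩
      · cases req
        · simp
        · simp only [Bool.not_true, Bool.false_or]
          rcases hreq rfl with ⟨h, hb⟩
          exact hb
      · intro hcond
        simp only [Bool.not_eq_true', Bool.or_eq_false_iff] at hcond
        obtain ⟨hp, hb0⟩ := hcond
        rcases hdom 0 (Nat.succ_pos n) with h | ⟨_, hp'⟩ | ⟨j, hj, hbj, hor⟩
        · exact absurd h (by intro ht; rw [ht] at hb0; simp at hb0)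
        · exact absurd hp' (by simp [hp])
        · have hj1 : j = 1 := by omega
          subst hj1
          have hn : 0 < n := by omega
          exact ⟨hn, hbj⟩
      · intro i hi
        rcases hdom (i+1) (by omega) with h | ⟨hk0, _⟩ | ⟨j, hj, hbj, hor⟩
        · left; exact h
        · omega
        · match j, hj, hor with
          | 0, hj, hor =>
            right; left
            exact ⟨by omega, hbj⟩
          | (j'+1), hj, hor =>
            right; right
            exact ⟨j', by omega, hbj, by omega⟩

-- wiring
def setToFun (n : ℕ) (S : Finset (Fin 1 × Fin n)) : Fin n → Bool :=
  fun j => decide ((0, j) ∈ S)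

def funToSet (n : ℕ) (b : Fin n → Bool) : Finset (Fin 1 × Fin n) :=
  Finset.univ.filter (fun p => b p.2 = true)

def setFunEquiv (n : ℕ) : Finset (Fin 1 × Fin n) ≃ (Fin n → Bool) where
  toFun := setToFun n
  invFun := funToSet n
  left_inv := by
    intro S
    ext p
    have hp : p = (0, p.2) := by
      have : p.1 = 0 := Subsingleton.elim _ _
      rw [← this]
    simp [funToSet, setToFun]
    rw [hp]
  right_inv := by
    intro b
    funext j
    simp [funToSet, setToFun]

lemma card_eq_prod (n : ℕ) (S : Finset (Fin 1 × Fin n)) :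
    (-1 : ℤ) ^ S.card = ∏ j : Fin n, (if setToFun n S j then (-1 : ℤ) else 1) := by
  have h1 : ∏ j : Fin n, (if setToFun n S j then (-1 : ℤ) else 1)
      = ∏ p : Fin 1 × Fin n, (if p ∈ S then (-1 : ℤ) else 1) := by
    rw [Fintype.prod_prod_type, Fin.prod_univ_one]
    simp [setToFun]
  rw [h1, Finset.prod_ite_mem, Finset.univ_inter, Finset.prod_const]

lemma isDomSet_iff (n : ℕ) (S : Finset (Fin 1 × Fin n)) :
    IsDomSet (gridGraph 1 n) S ↔ okB n false false (setToFun n S) = true := by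
  rw [okB_iff]
  simp only [Bool.false_eq_true, false_implies, true_and]
  constructor
  · intro h i hi
    rcases h (0, ⟨i, hi⟩) with hm | ⟨u, hu, hadj⟩
    · left; simp [setToFun, hm]
    · right; right
      refine ⟨u.2.val, u.2.isLt, ?_, ?_⟩
      · simp only [setToFun, decide_eq_true_eq]
        have : u = (0, u.2) := by
          have : u.1 = 0 := Subsingleton.elim _ _
          rw [← this]
        rwa [← this]
      · have h1 : u.1.val = 0 := by omega
        simp only [gridGraph] at hadj
        omega
  · intro h v
    rcases h v.2.val v.2.isLt with hm | ⟨_, hfalse⟩ | ⟨j, hj, hbj, hor⟩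
    · left
      simp only [setToFun, decide_eq_true_eq] at hm
      have : v = (0, v.2) := by
        have : v.1 = 0 := Subsingleton.elim _ _
        rw [← this]
      rw [this]
      convert hm
    · simp at hfalse
    · right
      refine ⟨(0, ⟨j, hj⟩), ?_, ?_⟩
      · simpa [setToFun] using hbj
      · show (((0:Fin 1).val : ℤ) - v.1.val).natAbs + ((j : ℤ) - v.2.val).natAbs = 1
        have : v.1.val = 0 := by omega
        simp only [Fin.val_zero, this]
        omega


theorem part1 (n : ℕ) (hn : 1 ≤ n) :
    ∑ S ∈ Finset.univ.filter (IsDomSet (gridGraph 1 n)), (-1 : ℤ) ^ S.card =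
      (-1 : ℤ) ^ ((n + 1) / 2) := by
  rw [Finset.sum_filter, ← domSum_val n hn, ← sum_okB n false false]
  apply Fintype.sum_equiv (setFunEquiv n)
  intro S
  rw [show setFunEquiv n S = setToFun n S from rfl]
  by_cases h : IsDomSet (gridGraph 1 n) S
  · rw [if_pos h, if_pos ((isDomSet_iff n S).mp h), card_eq_prod]
  · rw [if_neg h, if_neg (fun hc => h ((isDomSet_iff n S).mpr hc))]


/-- For the `1 × n` grid (path) graph the alternating sum `Σ_k (-1)^k N_k` over
dominating sets equals `(-1)^⌈n/2⌉`, but for the `2 × 2` grid graph (the 4-cycle)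
it equals `3`: the `±1` phenomenon fails for grid graphs. -/
theorem grid_alternating_sums :
    (∀ n : ℕ, 1 ≤ n →
      ∑ S ∈ Finset.univ.filter (IsDomSet (gridGraph 1 n)), (-1 : ℤ) ^ S.card =
        (-1 : ℤ) ^ ((n + 1) / 2)) ∧
    ∑ S ∈ Finset.univ.filter (IsDomSet (gridGraph 2 2)), (-1 : ℤ) ^ S.card = 3 := by
  exact ⟨part1, by decide⟩
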